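/- Let F ⊂ ℝ be bounded and infinite with complementary interval lengths l₁ ≥ l₂ ≥ … (the lengths of the bounded connected components of the complement of the closure of F inside the smallest closed interval I containing F). Then for every ε > 0, the number of boundary points of the one-dimensional ε-parallel set F_ε = {x ∈ ℝ : dist(x,F) ≤ ε} satisfies #(∂F_ε) = 2 + 2·#{j : l_j > 2ε}. -/

import Mathlib

open Metric Set

/-- For a bounded infinite `F ⊆ ℝ` whose bounded complementary gaps (the bounded
connected components of the complement of the closure of `F`) are enumerated by
`e : ℕ → Set ℝ` with non-increasing lengths `l j = diam (e j)`, for every `ε > 0`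
the boundary of the closed ε-parallel set of `F` has exactly
`2 + 2·#{j : l j > 2ε}` points. -/
theorem stmt4 (F : Set ℝ) (hFb : Bornology.IsBounded F) (hFi : F.Infinite)
    (l : ℕ → ℝ) (e : ℕ → Set ℝ)
    (he_inj : Function.Injective e)
    (he_range : Set.range e =
      {U : Set ℝ | ∃ x ∈ (closure F)ᶜ,
        U = connectedComponentIn (closure F)ᶜ x ∧ Bornology.IsBounded U})
    (hl : ∀ j, l j = Metric.diam (e j))
    (hmono : Antitone l)
    (ε : ℝ) (hε : 0 < ε) :
    (frontier (Metric.cthickening ε F)).ncard =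
      2 + 2 * {j : ℕ | 2 * ε < l j}.ncard := by
  classical
  set K := closure F with hK
  have hKcl : IsClosed K := isClosed_closure
  have hKc : IsCompact K := Metric.isCompact_of_isClosed_isBounded hKcl hFb.closure
  have hKne : K.Nonempty := hFi.nonempty.mono subset_closure
  have hKi : K.Infinite := hFi.mono subset_closure
  set a := sInf K with ha
  set b := sSup K with hb
  have haK : a ∈ K := hKc.sInf_mem hKne
  have hbK : b ∈ K := hKc.sSup_mem hKne
  have hKI : K ⊆ Icc a b := fun x hx => ⟨csInf_le hKc.bddBelow hx, le_csSup hKc.bddAbove hx⟩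
  have hab : a < b := by
    by_contra h
    push_neg at h
    exact hKi (Set.Finite.subset (finite_singleton a)
      (fun x hx => by have := hKI hx; simp only [mem_singleton_iff]; obtain ⟨h1,h2⟩ := this; linarith))
  -- gap structure
  set p : ℕ → ℝ := fun j => sInf (e j) with hp
  set q : ℕ → ℝ := fun j => sSup (e j) with hq
  have hwit : ∀ j, ∃ x ∈ Kᶜ, e j = connectedComponentIn Kᶜ x ∧ Bornology.IsBounded (e j) := by
    intro j
    have : e j ∈ range e := mem_range_self j
    rw [he_range] at this
    obtain ⟨x, hx, h1, h2⟩ := this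
    exact ⟨x, hx, h1, h1 ▸ h2⟩
  have hgap : ∀ j, e j = Ioo (p j) (q j) ∧ p j ∈ K ∧ q j ∈ K ∧ p j < q j := by
    intro j
    obtain ⟨x, hx, hcc, hbd⟩ := hwit j
    have hopen : IsOpen (e j) := by
      rw [hcc]; exact hKcl.isOpen_compl.connectedComponentIn
    have hneJ : (e j).Nonempty := by
      rw [hcc]; exact connectedComponentIn_nonempty_iff.mpr hx
    have hsubc : e j ⊆ Kᶜ := by rw [hcc]; exact connectedComponentIn_subset _ _
    have hord : OrdConnected (e j) := by
      rw [hcc]; exact isPreconnected_connectedComponentIn.ordConnected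
    have hbb : BddBelow (e j) := hbd.bddBelow
    have hba : BddAbove (e j) := hbd.bddAbove
    have hsub1 : e j ⊆ Icc (p j) (q j) := fun z hz => ⟨csInf_le hbb hz, le_csSup hba hz⟩
    have hpne : p j ∉ e j := by
      intro h
      obtain ⟨δ, hδ, hball⟩ := Metric.isOpen_iff.mp hopen _ h
      have hmem : p j - δ/2 ∈ e j := hball (by
        simp only [mem_ball, Real.dist_eq]
        rw [abs_of_nonpos (by linarith)]
        linarith)
      have := csInf_le hbb hmem
      change p j ≤ p j - δ/2 at this
      linarith
    have hqne : q j ∉ e j := by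
      intro h
      obtain ⟨δ, hδ, hball⟩ := Metric.isOpen_iff.mp hopen _ h
      have hmem : q j + δ/2 ∈ e j := hball (by
        simp only [mem_ball, Real.dist_eq]
        rw [abs_of_nonneg (by linarith)]
        linarith)
      have := le_csSup hba hmem
      change q j + δ/2 ≤ q j at this
      linarith
    have hIoo : Ioo (p j) (q j) ⊆ e j := by
      rintro z ⟨h1, h2⟩
      obtain ⟨u, hu, hu2⟩ := exists_lt_of_csInf_lt hneJ h1
      obtain ⟨v, hv, hv2⟩ := exists_lt_of_lt_csSup hneJ h2
      exact hord.out hu hv ⟨hu2.le, hv2.le⟩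
    have heq : e j = Ioo (p j) (q j) := by
      refine Subset.antisymm (fun z hz => ?_) hIoo
      obtain ⟨h1, h2⟩ := hsub1 hz
      exact ⟨h1.lt_of_ne (by rintro rfl; exact hpne hz),
        h2.lt_of_ne (by rintro rfl; exact hqne hz)⟩
    have hpq : p j < q j := by
      obtain ⟨z, hz⟩ := hneJ
      rw [heq] at hz
      exact hz.1.trans hz.2
    have hxe : x ∈ e j := by rw [hcc]; exact mem_connectedComponentIn hx
    have hpK : p j ∈ K := by
      by_contra hpK
      have hIcoSub : Ico (p j) (q j) ⊆ Kᶜ := by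
        rw [← Ioo_insert_left hpq]
        exact insert_subset hpK (heq ▸ hsubc)
      have h1 : Ico (p j) (q j) ⊆ connectedComponentIn Kᶜ (p j) :=
        isPreconnected_Ico.subset_connectedComponentIn (left_mem_Ico.mpr hpq) hIcoSub
      have hxcc : x ∈ connectedComponentIn Kᶜ (p j) := h1 (Ioo_subset_Ico_self (heq ▸ hxe))
      have hecc := connectedComponentIn_eq hxcc
      have : p j ∈ e j := by
        rw [hcc, ← hecc]
        exact mem_connectedComponentIn hpK
      exact hpne this
    have hqK : q j ∈ K := by
      by_contra hqK
      have hIocSub : Ioc (p j) (q j) ⊆ Kᶜ := by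
        rw [← Ioo_insert_right hpq]
        exact insert_subset hqK (heq ▸ hsubc)
      have h1 : Ioc (p j) (q j) ⊆ connectedComponentIn Kᶜ (q j) :=
        isPreconnected_Ioc.subset_connectedComponentIn (right_mem_Ioc.mpr hpq) hIocSub
      have hxcc : x ∈ connectedComponentIn Kᶜ (q j) := h1 (Ioo_subset_Ioc_self (heq ▸ hxe))
      have hecc := connectedComponentIn_eq hxcc
      have : q j ∈ e j := by
        rw [hcc, ← hecc]
        exact mem_connectedComponentIn hqK
      exact hqne this
    exact ⟨heq, hpK, hqK, hpq⟩
  have hl' : ∀ j, l j = q j - p j := by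
    intro j
    rw [hl j, (hgap j).1, Real.diam_Ioo (hgap j).2.2.2.le]
  have hsubK : ∀ j, e j ⊆ Kᶜ := by
    intro j
    obtain ⟨x, hx, hcc, _⟩ := hwit j
    rw [hcc]; exact connectedComponentIn_subset _ _
  have hdisj : ∀ j k, j ≠ k → Disjoint (e j) (e k) := by
    intro j k hjk
    rw [Set.disjoint_left]
    intro z hzj hzk
    obtain ⟨x, hx, hccj, _⟩ := hwit j
    obtain ⟨y, hy, hcck, _⟩ := hwit k
    have h1 : e j = connectedComponentIn Kᶜ z := by
      rw [hccj]; exact connectedComponentIn_eq (hccj ▸ hzj)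
    have h2 : e k = connectedComponentIn Kᶜ z := by
      rw [hcck]; exact connectedComponentIn_eq (hcck ▸ hzk)
    exact hjk (he_inj (h1.trans h2.symm))
  have hcov : ∀ z, a < z → z < b → z ∉ K → ∃ j, z ∈ e j := by
    intro z hz1 hz2 hzK
    have hzc : z ∈ Kᶜ := hzK
    have hCord : OrdConnected (connectedComponentIn Kᶜ z) :=
      isPreconnected_connectedComponentIn.ordConnected
    have hzC : z ∈ connectedComponentIn Kᶜ z := mem_connectedComponentIn hzc
    have hCsub : connectedComponentIn Kᶜ z ⊆ Ioo a b := by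
      intro y hy
      constructor
      · by_contra hya
        push_neg at hya
        have : a ∈ connectedComponentIn Kᶜ z := hCord.out hy hzC ⟨hya, hz1.le⟩
        exact (connectedComponentIn_subset _ _ this) haK
      · by_contra hyb
        push_neg at hyb
        have : b ∈ connectedComponentIn Kᶜ z := hCord.out hzC hy ⟨hz2.le, hyb⟩
        exact (connectedComponentIn_subset _ _ this) hbK
    have hCbdd : Bornology.IsBounded (connectedComponentIn Kᶜ z) :=
      (Metric.isBounded_Ioo a b).subset hCsub
    have hCr : connectedComponentIn Kᶜ z ∈ range e := by
      rw [he_range]; exact ⟨z, hzc, rfl, hCbdd⟩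
    obtain ⟨j, hj⟩ := hCr
    exact ⟨j, hj ▸ hzC⟩
  set T := {j : ℕ | 2 * ε < l j} with hT
  have heIcc : ∀ j, e j ⊆ Icc a b := by
    intro j
    rw [(hgap j).1]
    exact Ioo_subset_Icc_self.trans (Icc_subset_Icc (hKI (hgap j).2.1).1 (hKI (hgap j).2.2.1).2)
  have hTfin : T.Finite := by
    by_contra hTinf
    have hTinf' : T.Infinite := hTinf
    obtain ⟨t, hts, htc⟩ := hTinf'.exists_subset_card_eq (⌈(b - a) / (2 * ε)⌉₊ + 1)
    have hkey : MeasureTheory.volume (⋃ j ∈ t, e j) = ∑ j ∈ t, MeasureTheory.volume (e j) :=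
      MeasureTheory.measure_biUnion_finset (fun i _ k _ h => hdisj i k h)
        (fun j _ => (hgap j).1 ▸ measurableSet_Ioo)
    have hle : MeasureTheory.volume (⋃ j ∈ t, e j) ≤ MeasureTheory.volume (Icc a b) :=
      MeasureTheory.measure_mono (iUnion₂_subset fun j _ => heIcc j)
    have heach : ∀ j ∈ t, ENNReal.ofReal (2 * ε) ≤ MeasureTheory.volume (e j) := by
      intro j hj
      rw [(hgap j).1, Real.volume_Ioo]
      have h2 : 2 * ε < l j := hts hj
      rw [hl' j] at h2
      exact ENNReal.ofReal_le_ofReal h2.le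
    have hsum : (t.card : ENNReal) * ENNReal.ofReal (2 * ε) ≤ ∑ j ∈ t, MeasureTheory.volume (e j) := by
      calc (t.card : ENNReal) * ENNReal.ofReal (2 * ε) = t.card • ENNReal.ofReal (2 * ε) := by
            simp [nsmul_eq_mul]
        _ ≤ ∑ j ∈ t, MeasureTheory.volume (e j) := Finset.card_nsmul_le_sum t _ _ heach
    have hba' : (b - a) < (t.card : ℝ) * (2 * ε) := by
      rw [htc]
      push_cast
      have h1 : (b - a) / (2 * ε) ≤ (⌈(b - a) / (2 * ε)⌉₊ : ℝ) := Nat.le_ceil _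
      have h2ε : (0:ℝ) < 2 * ε := by linarith
      nlinarith [Nat.le_ceil ((b - a) / (2 * ε)), (div_le_iff₀ h2ε).mp h1]
    have hcontr : MeasureTheory.volume (Icc a b) < (t.card : ENNReal) * ENNReal.ofReal (2 * ε) := by
      rw [Real.volume_Icc]
      calc ENNReal.ofReal (b - a) < ENNReal.ofReal ((t.card : ℝ) * (2 * ε)) := by
            apply ENNReal.ofReal_lt_ofReal_iff_of_nonneg (by linarith) |>.mpr hba'
        _ = (t.card : ENNReal) * ENNReal.ofReal (2 * ε) := by
            rw [ENNReal.ofReal_mul (Nat.cast_nonneg t.card), ENNReal.ofReal_natCast]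
    exact absurd (hkey ▸ hle) (not_le.mpr (lt_of_lt_of_le hcontr hsum))
  -- membership characterization of the thickening
  have hmem : ∀ x : ℝ, x ∈ cthickening ε F ↔ ∃ y ∈ K, |x - y| ≤ ε := by
    intro x
    rw [← Metric.cthickening_closure, ← hK, hKc.cthickening_eq_biUnion_closedBall hε.le]
    simp [mem_closedBall, Real.dist_eq]
  have hA : cthickening ε F = Icc (a - ε) (b + ε) \ ⋃ j ∈ T, Ioo (p j + ε) (q j - ε) := by
    ext x
    rw [hmem x]
    constructor
    · rintro ⟨y, hyK, hxy⟩
      have hy := hKI hyK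
      rw [abs_le] at hxy
      refine ⟨⟨by linarith [hy.1], by linarith [hy.2]⟩, ?_⟩
      intro hx
      rw [mem_iUnion₂] at hx
      obtain ⟨j, hjT, hx1, hx2⟩ := hx
      have hyg : y ∉ Ioo (p j) (q j) := fun h => (hsubK j ((hgap j).1 ▸ h)) hyK
      rw [mem_Ioo, not_and_or, not_lt, not_lt] at hyg
      rcases hyg with h | h
      · linarith
      · linarith
    · rintro ⟨⟨hx1, hx2⟩, hxP⟩
      rcases le_or_gt x a with hxa | hxa
      · exact ⟨a, haK, by rw [abs_le]; constructor <;> linarith⟩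
      rcases le_or_gt b x with hbx | hbx
      · exact ⟨b, hbK, by rw [abs_le]; constructor <;> linarith⟩
      by_cases hxK : x ∈ K
      · exact ⟨x, hxK, by simp [hε.le]⟩
      obtain ⟨j, hj⟩ := hcov x hxa hbx hxK
      rw [(hgap j).1, mem_Ioo] at hj
      by_cases hjT : j ∈ T
      · have : x ∉ Ioo (p j + ε) (q j - ε) := fun h => hxP (mem_iUnion₂.mpr ⟨j, hjT, h⟩)
        rw [mem_Ioo, not_and_or, not_lt, not_lt] at this
        rcases this with h | h
        · exact ⟨p j, (hgap j).2.1, by rw [abs_le]; constructor <;> linarith [hj.1]⟩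
        · exact ⟨q j, (hgap j).2.2.1, by rw [abs_le]; constructor <;> linarith [hj.2]⟩
      · have hlj : l j ≤ 2 * ε := not_lt.mp hjT
        rw [hl' j] at hlj
        rcases le_or_gt x (p j + ε) with h | h
        · exact ⟨p j, (hgap j).2.1, by rw [abs_le]; constructor <;> linarith [hj.1]⟩
        · exact ⟨q j, (hgap j).2.2.1, by rw [abs_le]; constructor <;> linarith [hj.2]⟩
  set S : Set ℝ := {a - ε, b + ε} ∪ ⋃ j ∈ T, ({p j + ε, q j - ε} : Set ℝ) with hS
  have hpa : ∀ j, a ≤ p j := fun j => (hKI (hgap j).2.1).1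
  have hqb : ∀ j, q j ≤ b := fun j => (hKI (hgap j).2.2.1).2
  have hTgap : ∀ j ∈ T, 2 * ε < q j - p j := fun j hj => hl' j ▸ hj
  have hmemp : ∀ j ∈ T, p j + ε ∈ Ioo (p j) (q j) := by
    intro j hj
    have := hTgap j hj
    exact ⟨by linarith, by linarith⟩
  have hmemq : ∀ j ∈ T, q j - ε ∈ Ioo (p j) (q j) := by
    intro j hj
    have := hTgap j hj
    exact ⟨by linarith, by linarith⟩
  have hAclosed : IsClosed (cthickening ε F) := isClosed_cthickening
  have hUint : Ioo (a - ε) (b + ε) \ ⋃ j ∈ T, Icc (p j + ε) (q j - ε)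
      ⊆ interior (cthickening ε F) := by
    apply interior_maximal
    · rw [hA]
      exact diff_subset_diff Ioo_subset_Icc_self
        (iUnion₂_mono fun j hj => Ioo_subset_Icc_self)
    · exact isOpen_Ioo.sdiff (hTfin.isClosed_biUnion fun j _ => isClosed_Icc)
  have hSsub : S ⊆ cthickening ε F := by
    rw [hA]
    rintro x (hx | hx)
    · rcases hx with rfl | rfl
      · refine ⟨⟨le_refl _, by linarith⟩, ?_⟩
        intro hx
        rw [mem_iUnion₂] at hx
        obtain ⟨j, hjT, h1, h2⟩ := hx
        have := hpa j
        linarith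
      · refine ⟨⟨by linarith, le_refl _⟩, ?_⟩
        intro hx
        rw [mem_iUnion₂] at hx
        obtain ⟨j, hjT, h1, h2⟩ := hx
        have := hqb j
        linarith
    · rw [mem_iUnion₂] at hx
      obtain ⟨j, hjT, hx⟩ := hx
      have hgj := hTgap j hjT
      have hpaj := hpa j
      have hqbj := hqb j
      have hxe : x ∈ e j := by
        rw [(hgap j).1]
        rcases hx with rfl | rfl
        · exact hmemp j hjT
        · exact hmemq j hjT
      refine ⟨?_, ?_⟩
      · rcases hx with rfl | rfl
        · exact ⟨by linarith, by linarith⟩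
        · exact ⟨by linarith, by linarith⟩
      · intro hmem
        rw [mem_iUnion₂] at hmem
        obtain ⟨k, hkT, hk1, hk2⟩ := hmem
        have hxek : x ∈ e k := by
          rw [(hgap k).1]
          exact ⟨by linarith [(hmemp k hkT).1], by linarith [(hmemq k hkT).2]⟩
        by_cases hjk : j = k
        · subst hjk
          rcases hx with rfl | rfl
          · linarith
          · linarith
        · exact Set.disjoint_left.mp (hdisj j k hjk) hxe hxek
  have hSnotint : ∀ x ∈ S, x ∉ interior (cthickening ε F) := by
    intro x hxS hxint
    obtain ⟨δ, hδ, hball⟩ := Metric.mem_nhds_iff.mp (mem_interior_iff_mem_nhds.mp hxint)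
    have hballA : ball x δ ⊆ Icc (a - ε) (b + ε) \ ⋃ j ∈ T, Ioo (p j + ε) (q j - ε) :=
      hA ▸ hball
    rcases hxS with hx | hx
    · rcases hx with rfl | rfl
      · have : a - ε - δ/2 ∈ ball (a - ε) δ := by
          simp only [mem_ball, Real.dist_eq]
          rw [abs_of_nonpos (by linarith)]
          linarith
        have := (hballA this).1.1
        linarith
      · have : b + ε + δ/2 ∈ ball (b + ε) δ := by
          simp only [mem_ball, Real.dist_eq]
          rw [abs_of_nonneg (by linarith)]
          linarith
        have := (hballA this).1.2
        linarith
    · rw [mem_iUnion₂] at hx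
      obtain ⟨j, hjT, hx⟩ := hx
      have hgj := hTgap j hjT
      rcases hx with rfl | rfl
      · set w := p j + ε + min (δ/2) ((q j - p j - 2*ε)/2) with hw
        have hminpos : 0 < min (δ/2) ((q j - p j - 2*ε)/2) := lt_min (by linarith) (by linarith)
        have hmin1 : min (δ/2) ((q j - p j - 2*ε)/2) ≤ δ/2 := min_le_left _ _
        have hmin2 : min (δ/2) ((q j - p j - 2*ε)/2) ≤ (q j - p j - 2*ε)/2 := min_le_right _ _
        have hwball : w ∈ ball (p j + ε) δ := by
          simp only [mem_ball, Real.dist_eq, hw]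
          rw [abs_of_nonneg (by linarith)]
          linarith
        have hwIoo : w ∈ Ioo (p j + ε) (q j - ε) := by
          rw [mem_Ioo, hw]
          constructor <;> linarith
        exact (hballA hwball).2 (mem_iUnion₂.mpr ⟨j, hjT, hwIoo⟩)
      · set w := q j - ε - min (δ/2) ((q j - p j - 2*ε)/2) with hw
        have hminpos : 0 < min (δ/2) ((q j - p j - 2*ε)/2) := lt_min (by linarith) (by linarith)
        have hmin1 : min (δ/2) ((q j - p j - 2*ε)/2) ≤ δ/2 := min_le_left _ _
        have hmin2 : min (δ/2) ((q j - p j - 2*ε)/2) ≤ (q j - p j - 2*ε)/2 := min_le_right _ _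
        have hwball : w ∈ ball (q j - ε) δ := by
          simp only [mem_ball, Real.dist_eq, hw]
          rw [abs_of_nonpos (by linarith)]
          linarith
        have hwIoo : w ∈ Ioo (p j + ε) (q j - ε) := by
          rw [mem_Ioo, hw]
          constructor <;> linarith
        exact (hballA hwball).2 (mem_iUnion₂.mpr ⟨j, hjT, hwIoo⟩)
  have hfr : frontier (cthickening ε F) = S := by
    rw [hAclosed.frontier_eq]
    apply Subset.antisymm
    · rintro x ⟨hxA, hxint⟩
      have hxU : x ∉ Ioo (a - ε) (b + ε) \ ⋃ j ∈ T, Icc (p j + ε) (q j - ε) :=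
        fun h => hxint (hUint h)
      rw [hA] at hxA
      obtain ⟨⟨hx1, hx2⟩, hxP⟩ := hxA
      rw [mem_diff, not_and_or, not_notMem] at hxU
      rcases hxU with hxU | hxU
      · rw [mem_Ioo, not_and_or, not_lt, not_lt] at hxU
        rcases hxU with h | h
        · exact Or.inl (Or.inl (le_antisymm h hx1))
        · exact Or.inl (Or.inr (mem_singleton_iff.mpr (le_antisymm hx2 h)))
      · rw [mem_iUnion₂] at hxU
        obtain ⟨j, hjT, hj1, hj2⟩ := hxU
        have hnoo : x ∉ Ioo (p j + ε) (q j - ε) := fun h => hxP (mem_iUnion₂.mpr ⟨j, hjT, h⟩)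
        rw [mem_Ioo, not_and_or, not_lt, not_lt] at hnoo
        refine Or.inr (mem_iUnion₂.mpr ⟨j, hjT, ?_⟩)
        rcases hnoo with h | h
        · exact Or.inl (le_antisymm h hj1)
        · exact Or.inr (mem_singleton_iff.mpr (le_antisymm hj2 h))
    · exact fun x hx => ⟨hSsub hx, hSnotint x hx⟩
  rw [hfr]
  have hpe : ∀ j ∈ T, p j + ε ∈ e j := fun j hj => (hgap j).1 ▸ hmemp j hj
  have hqe : ∀ j ∈ T, q j - ε ∈ e j := fun j hj => (hgap j).1 ▸ hmemq j hj
  have hbiU : (⋃ j ∈ T, ({p j + ε, q j - ε} : Set ℝ)) =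
      (fun j => p j + ε) '' T ∪ (fun j => q j - ε) '' T := by
    ext x
    simp only [mem_iUnion, mem_insert_iff, mem_singleton_iff, mem_union, mem_image,
      exists_prop]
    constructor
    · rintro ⟨j, hj, (rfl | rfl)⟩
      · exact Or.inl ⟨j, hj, rfl⟩
      · exact Or.inr ⟨j, hj, rfl⟩
    · rintro (⟨j, hj, rfl⟩ | ⟨j, hj, rfl⟩)
      · exact ⟨j, hj, Or.inl rfl⟩
      · exact ⟨j, hj, Or.inr rfl⟩
  have hinjp : InjOn (fun j => p j + ε) T := by
    intro j hj k hk hjk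
    by_contra hne
    have h1 : p j + ε ∈ e k := by
      have : p k + ε = p j + ε := hjk.symm
      exact this ▸ hpe k hk
    exact Set.disjoint_left.mp (hdisj j k hne) (hpe j hj) h1
  have hinjq : InjOn (fun j => q j - ε) T := by
    intro j hj k hk hjk
    by_contra hne
    have h1 : q j - ε ∈ e k := by
      have : q k - ε = q j - ε := hjk.symm
      exact this ▸ hqe k hk
    exact Set.disjoint_left.mp (hdisj j k hne) (hqe j hj) h1
  have hfin1 : ((fun j => p j + ε) '' T).Finite := hTfin.image _
  have hfin2 : ((fun j => q j - ε) '' T).Finite := hTfin.image _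
  have hd12 : Disjoint ((fun j => p j + ε) '' T) ((fun j => q j - ε) '' T) := by
    rw [Set.disjoint_left]
    rintro x ⟨j, hj, rfl⟩ ⟨k, hk, hkeq⟩
    simp only at hkeq
    by_cases hjk : j = k
    · subst hjk
      have := hTgap j hj
      linarith
    · have h1 : p j + ε ∈ e k := hkeq ▸ hqe k hk
      exact Set.disjoint_left.mp (hdisj j k hjk) (hpe j hj) h1
  have hdpair : Disjoint ({a - ε, b + ε} : Set ℝ)
      ((fun j => p j + ε) '' T ∪ (fun j => q j - ε) '' T) := by
    rw [Set.disjoint_left]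
    rintro x (rfl | rfl) hmem <;>
      rcases hmem with ⟨j, hj, heq⟩ | ⟨j, hj, heq⟩ <;>
      simp only at heq <;>
      [ (exact absurd heq (by have := hpa j; intro h; linarith));
        (exact absurd heq (by have := hpa j; have := (hgap j).2.2.2; intro h; linarith));
        (exact absurd heq (by have := hqb j; have := (hgap j).2.2.2; intro h; linarith));
        (exact absurd heq (by have := hqb j; intro h; linarith))]
  have hne : a - ε ≠ b + ε := by intro h; linarith
  rw [hS, hbiU, Set.ncard_union_eq hdpair (by simp) (hfin1.union hfin2),
    Set.ncard_union_eq hd12 hfin1 hfin2,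
    Set.ncard_image_of_injOn hinjp, Set.ncard_image_of_injOn hinjq,
    Set.ncard_pair hne]
  ring
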